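/- Let p be a prime, let K be a finite extension of ℚ_p with valuation ring V, let ϖ be a uniformizer of V, and let q be the cardinality of the residue field of V. Let S be an integrally closed integral domain which is a V-algebra containing V (so that K embeds into the fraction field of S). Let E, α ∈ S satisfy E·α^{q−1} = −ϖ, let k ≥ 0 and m ≥ 0 be integers, and let g ∈ K satisfy g^{q−1} ∈ ϖ^{p^k + m(q−1)}·V (equivalently, val(g) ≥ m + p^k/(q−1) for the valuation normalized by val(ϖ) = 1). Then there exists s ∈ S such that g = ϖ^m · α^{p^k} · s; that is, the element g·α^{−p^k} of the fraction field of S lies in ϖ^m S. -/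

import Mathlib

/-- Let `p` be a prime, `K` a finite extension of `ℚ_p` with valuation ring `V`
(a discrete valuation ring with fraction field `K`), `ϖ` a uniformizer of `V` and
`q` the cardinality of the residue field of `V`.  Let `S` be an integrally closed
integral domain which is a `V`-algebra containing `V`, so that `K` embeds into the
fraction field of `S` via a ring homomorphism `ι` compatible with `V → S`.
Let `E, α ∈ S` satisfy `E * α^(q-1) = -ϖ`, let `k, m ≥ 0` be integers and let
`g ∈ K` satisfy `g^(q-1) ∈ ϖ^(p^k + m(q-1)) · V`.  Then there exists `s ∈ S`
such that `g = ϖ^m · α^(p^k) · s` in the fraction field of `S`. -/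
theorem gauss_sum_integrality
    (p : ℕ) [Fact p.Prime]
    (K : Type*) [Field K] [Algebra ℚ_[p] K] [FiniteDimensional ℚ_[p] K]
    (V : Type*) [CommRing V] [IsDomain V] [IsDiscreteValuationRing V]
    [Algebra V K] [IsFractionRing V K]
    (ϖ : V) (hϖ : Irreducible ϖ)
    (q : ℕ) [Fintype (IsLocalRing.ResidueField V)]
    (hq : q = Fintype.card (IsLocalRing.ResidueField V))
    (S : Type*) [CommRing S] [IsDomain S] [IsIntegrallyClosed S] [Algebra V S]
    (hinj : Function.Injective (algebraMap V S))
    (ι : K →+* FractionRing S)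
    (hι : ∀ v : V, ι (algebraMap V K v)
      = algebraMap S (FractionRing S) (algebraMap V S v))
    (E α : S) (hEα : E * α ^ (q - 1) = algebraMap V S (-ϖ))
    (k m : ℕ) (g : K)
    (hg : ∃ v : V, g ^ (q - 1) = algebraMap V K (ϖ ^ (p ^ k + m * (q - 1)) * v)) :
    ∃ s : S, ι g = algebraMap S (FractionRing S)
      (algebraMap V S (ϖ ^ m) * α ^ (p ^ k) * s) := by

  classical
  obtain ⟨v, hv⟩ := hg
  set F := FractionRing S
  set φ : S →+* F := algebraMap S F with hφ
  have hφinj : Function.Injective φ := IsFractionRing.injective S F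
  -- q ≥ 2
  have hq2 : 2 ≤ q := by
    rw [hq]; exact Fintype.one_lt_card
  have hq1 : q - 1 ≠ 0 := by omega
  -- ϖ maps to (-E) * α^(q-1)
  have hϖS : algebraMap V S ϖ = (-E) * α ^ (q - 1) := by
    have h : -(E * α ^ (q - 1)) = -(algebraMap V S (-ϖ)) := by rw [hEα]
    simpa [neg_mul] using h.symm
  have hϖ0 : ϖ ≠ 0 := hϖ.ne_zero
  have hϖS0 : algebraMap V S ϖ ≠ 0 := by
    intro h
    exact hϖ0 (hinj (by simpa using h))
  have hα0 : α ≠ 0 := by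
    intro h
    apply hϖS0
    rw [hϖS, h, zero_pow hq1, mul_zero]
  -- the denominator
  set d : S := algebraMap V S (ϖ ^ m) * α ^ p ^ k with hd
  have hd0 : d ≠ 0 := by
    apply mul_ne_zero
    · simpa [map_pow] using pow_ne_zero m hϖS0
    · exact pow_ne_zero _ hα0
  have hφd0 : φ d ≠ 0 := fun h => hd0 (hφinj (by simpa using h))
  set t : F := ι g / φ d with ht
  -- key power computation
  set c : S := algebraMap V S v * (-E) ^ p ^ k with hc
  have hkey : (ι g) ^ (q - 1) = φ c * φ d ^ (q - 1) := by
    have h1 : (ι g) ^ (q - 1) = φ (algebraMap V S (ϖ ^ (p ^ k + m * (q - 1)) * v)) := by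
      rw [← map_pow, hv, hι]
    rw [h1, ← map_pow, ← map_mul]
    congr 1
    rw [map_mul, map_pow, hϖS, hd, hc, map_pow, hϖS]
    ring_nf
  have htpow : t ^ (q - 1) = φ c := by
    rw [ht, div_pow, hkey, mul_div_assoc, div_self (pow_ne_zero _ hφd0), mul_one]
  -- t is integral over S
  have hint : IsIntegral S t := by
    refine ⟨Polynomial.X ^ (q - 1) - Polynomial.C c, Polynomial.monic_X_pow_sub_C c hq1, ?_⟩
    simp [Polynomial.eval₂_sub, Polynomial.eval₂_pow, htpow, hφ]
  obtain ⟨s, hs⟩ := IsIntegrallyClosed.isIntegral_iff.mp hint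
  refine ⟨s, ?_⟩
  have : ι g = φ d * t := by
    rw [ht, mul_div_cancel₀ _ hφd0]
  rw [this, ← hs, ← map_mul]
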